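/- Let n ≥ 1 and let T = (T_1,…,T_n) be a spherical unitary on a complex Hilbert space H, i.e. the T_i are commuting bounded operators, each T_i is normal, and T_1 T_1^* + ⋯ + T_n T_n^* = I. Let H be a closed subspace of a complex Hilbert space L and let W = (W_1,…,W_n) be a minimal isometric dilation of T: each W_i is a bounded operator on L with W_i^* W_j = δ_{ij} I, W_i^* u = T_i^* u for all u ∈ H and all i, and the closed linear span of {W^α u : u ∈ H, α a word} is L. Then the maximal commuting piece space of W equals H: L^c(W) = {x ∈ L : (W_i^* W_j^* − W_j^* W_i^*)(W^α)^* x = 0 for all i, j, α} = H. -/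

import Mathlib

open ContinuousLinearMap

set_option linter.unusedSectionVars false
set_option maxHeartbeats 1000000

noncomputable def wordProd {n : ℕ} {L : Type*} [NormedAddCommGroup L] [InnerProductSpace ℂ L]
    (R : Fin n → L →L[ℂ] L) (α : List (Fin n)) : L →L[ℂ] L :=
  (α.map R).prod

/-- The maximal commuting piece space of a tuple. -/
noncomputable def commPieceSet {n : ℕ} {L : Type*} [NormedAddCommGroup L]
    [InnerProductSpace ℂ L] [CompleteSpace L] (R : Fin n → L →L[ℂ] L) : Set L :=
  {x : L | ∀ (i j : Fin n) (α : List (Fin n)),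
    adjoint (R i) (adjoint (R j) (adjoint (wordProd R α) x)) =
    adjoint (R j) (adjoint (R i) (adjoint (wordProd R α) x))}

local notation "⟪" x ", " y "⟫" => @inner ℂ _ _ x y

/-- removing position `k` from a tuple, as lists: a permutation fact. -/
lemma ofFn_perm {γ : Type*} : ∀ {m : ℕ} (β : Fin (m+1) → γ) (k : Fin (m+1)),
    (List.ofFn β).Perm (β k :: List.ofFn (Fin.removeNth k β)) := by
  intro m
  induction m with
  | zero =>
      intro β k
      have hk : k = 0 := by
        have := k.isLt
        ext
        omega
      subst hk
      simp [Fin.removeNth, List.ofFn_succ]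
  | succ m ih =>
      intro β k
      cases k using Fin.cases with
      | zero =>
          have : Fin.removeNth 0 β = fun i => β i.succ := by
            funext i; simp [Fin.removeNth]
          rw [this, List.ofFn_succ]
      | succ k' =>
          have h1 : List.ofFn β = β 0 :: List.ofFn (fun i => β i.succ) := List.ofFn_succ
          have h2 := ih (fun i => β i.succ) k'
          have hfun : Fin.removeNth (k'.succ) β
              = Fin.cons (β 0) (Fin.removeNth k' (fun i => β i.succ)) := by
            funext i
            cases i using Fin.cases with
            | zero => simp [Fin.removeNth]
            | succ i' => simp [Fin.removeNth, Fin.succ_succAbove_succ]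
          have h3 : List.ofFn (Fin.removeNth (k'.succ) β)
              = β 0 :: List.ofFn (Fin.removeNth k' (fun i => β i.succ)) := by
            rw [hfun, List.ofFn_cons]
          rw [h1, h3]
          exact (List.Perm.cons (β 0) h2).trans (List.Perm.swap (β k'.succ) (β 0) _)

section Aux
variable {n : ℕ} {L : Type*} [NormedAddCommGroup L] [InnerProductSpace ℂ L] [CompleteSpace L]
  {H : Submodule ℂ L} [CompleteSpace H] {T : Fin n → H →L[ℂ] H} {W : Fin n → L →L[ℂ] L}

lemma wordProd_cons (R : Fin n → L →L[ℂ] L) (j : Fin n) (l : List (Fin n)) :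
    wordProd R (j :: l) = R j ∘L wordProd R l := by
  simp [wordProd, List.prod_cons, ContinuousLinearMap.mul_def]

lemma wordProd_append (R : Fin n → L →L[ℂ] L) (ρ l : List (Fin n)) :
    wordProd R (ρ ++ l) = wordProd R ρ ∘L wordProd R l := by
  simp [wordProd, List.prod_append, ContinuousLinearMap.mul_def]

lemma adj_wordProd_cons (R : Fin n → L →L[ℂ] L) (j : Fin n) (l : List (Fin n)) (x : L) :
    adjoint (wordProd R (j :: l)) x = adjoint (wordProd R l) (adjoint (R j) x) := by
  rw [wordProd_cons, adjoint_comp]; rfl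

lemma adj_wordProd_append (R : Fin n → L →L[ℂ] L) (ρ l : List (Fin n)) (x : L) :
    adjoint (wordProd R (ρ ++ l)) x = adjoint (wordProd R l) (adjoint (wordProd R ρ) x) := by
  rw [wordProd_append, adjoint_comp]; rfl

/-- perm invariance of adjoint strings on commuting-piece vectors. -/
lemma cp_perm {y : L} (hy : y ∈ commPieceSet W)
    {l₁ l₂ : List (Fin n)} (h : l₁.Perm l₂) :
    adjoint (wordProd W l₁) y = adjoint (wordProd W l₂) y := by
  have key : ∀ (x z : Fin n) (l ρ : List (Fin n)),
      adjoint (wordProd W (ρ ++ x :: z :: l)) y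
        = adjoint (wordProd W (ρ ++ z :: x :: l)) y := by
    intro x z l ρ
    rw [adj_wordProd_append, adj_wordProd_append, adj_wordProd_cons, adj_wordProd_cons,
        adj_wordProd_cons, adj_wordProd_cons]
    exact congrArg (adjoint (wordProd W l)) (hy z x ρ)
  have main : ∀ {a b : List (Fin n)}, a.Perm b → ∀ ρ : List (Fin n),
      adjoint (wordProd W (ρ ++ a)) y = adjoint (wordProd W (ρ ++ b)) y := by
    intro a b hab
    induction hab with
    | nil => intro ρ; rfl
    | cons x h ih =>
        intro ρ
        rename_i c d
        have h1 : ρ ++ x :: c = (ρ ++ [x]) ++ c := by simp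
        have h2 : ρ ++ x :: d = (ρ ++ [x]) ++ d := by simp
        rw [h1, h2, ih]
    | swap x z l => intro ρ; exact key z x l ρ
    | trans h1 h2 ih1 ih2 => intro ρ; rw [ih1, ih2]
  have := main h []
  simpa using this

/-- density: vectors orthogonal to all `W^α u` vanish. -/
lemma dense_zero
    (hmin : (Submodule.span ℂ {x : L | ∃ (α : List (Fin n)) (u : H),
      x = wordProd W α (u : L)}).topologicalClosure = ⊤)
    (x : L) (h : ∀ (l : List (Fin n)) (u : H), ⟪x, wordProd W l (u : L)⟫ = 0) : x = 0 := by
  have hle : Submodule.span ℂ {z : L | ∃ (α : List (Fin n)) (u : H),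
      z = wordProd W α (u : L)} ≤ (ℂ ∙ x)ᗮ := by
    rw [Submodule.span_le]
    rintro z ⟨α, u, rfl⟩
    intro w hw
    rw [Submodule.mem_span_singleton] at hw
    obtain ⟨c, rfl⟩ := hw
    rw [inner_smul_left]
    rw [h α u]
    simp
  have hcl : ((ℂ ∙ x)ᗮ).topologicalClosure = (ℂ ∙ x)ᗮ :=
    IsClosed.submodule_topologicalClosure_eq (Submodule.isClosed_orthogonal _)
  have : (⊤ : Submodule ℂ L) ≤ (ℂ ∙ x)ᗮ := by
    rw [← hmin, ← hcl]
    exact Submodule.topologicalClosure_mono hle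
  have hx : x ∈ (ℂ ∙ x)ᗮ := this trivial
  have := hx x (Submodule.mem_span_singleton_self x)
  rwa [inner_self_eq_zero] at this

lemma isom_pair (hisom : ∀ i j : Fin n, adjoint (W i) ∘L W j = if i = j then 1 else 0)
    (i j : Fin n) (x z : L) : ⟪W i x, W j z⟫ = if i = j then ⟪x, z⟫ else 0 := by
  have : ⟪W i x, W j z⟫ = ⟪x, (adjoint (W i) ∘L W j) z⟫ := by
    rw [ContinuousLinearMap.comp_apply, adjoint_inner_right]
  rw [this, hisom i j]
  by_cases hij : i = j <;> simp [hij]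

lemma tsum_inner (hsum : ∑ i : Fin n, T i ∘L adjoint (T i) = 1) (x z : H) :
    ∑ j : Fin n, ⟪adjoint (T j) x, adjoint (T j) z⟫ = ⟪x, z⟫ := by
  have : ∀ j : Fin n, ⟪adjoint (T j) x, adjoint (T j) z⟫ = ⟪(T j ∘L adjoint (T j)) x, z⟫ := by
    intro j
    rw [ContinuousLinearMap.comp_apply]
    exact adjoint_inner_right (T j) _ _
  rw [Finset.sum_congr rfl (fun j _ => this j), ← sum_inner, ← ContinuousLinearMap.sum_apply,
    hsum]
  rfl

/-- key identity from minimality: `u = ∑ⱼ Wⱼ Tⱼ* u` for `u ∈ H`. -/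
lemma step3
    (hsum : ∑ i : Fin n, T i ∘L adjoint (T i) = 1)
    (hisom : ∀ i j : Fin n, adjoint (W i) ∘L W j = if i = j then 1 else 0)
    (hdil : ∀ (i : Fin n) (u : H), adjoint (W i) (u : L) = ((adjoint (T i)) u : L))
    (hmin : (Submodule.span ℂ {x : L | ∃ (α : List (Fin n)) (u : H),
      x = wordProd W α (u : L)}).topologicalClosure = ⊤)
    (u : H) : (u : L) = ∑ j : Fin n, W j ((adjoint (T j) u : H) : L) := by
  set d : L := (u : L) - ∑ j : Fin n, W j ((adjoint (T j) u : H) : L) with hd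
  have hadj : ∀ k : Fin n, adjoint (W k) d = 0 := by
    intro k
    rw [hd]
    rw [map_sub, map_sum, hdil k u]
    have : ∀ j : Fin n, adjoint (W k) (W j ((adjoint (T j) u : H) : L))
        = if k = j then ((adjoint (T j) u : H) : L) else 0 := by
      intro j
      have := congrArg (fun (A : L →L[ℂ] L) => A ((adjoint (T j) u : H) : L)) (hisom k j)
      simp only [ContinuousLinearMap.comp_apply] at this
      rw [this]
      by_cases hkj : k = j <;> simp [hkj]
    rw [Finset.sum_congr rfl (fun j _ => this j), Finset.sum_ite_eq (Finset.univ) k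
      (fun j => ((adjoint (T j) u : H) : L))]
    simp
  have horto : ∀ (l : List (Fin n)) (v : H), ⟪d, wordProd W l (v : L)⟫ = 0 := by
    intro l v
    cases l with
    | nil =>
        show ⟪d, (1 : L →L[ℂ] L) (v : L)⟫ = 0
        rw [ContinuousLinearMap.one_apply, hd, inner_sub_left, sum_inner]
        have : ∀ j : Fin n, ⟪W j ((adjoint (T j) u : H) : L), (v : L)⟫
            = ⟪adjoint (T j) u, adjoint (T j) v⟫ := by
          intro j
          rw [← adjoint_inner_right (W j), hdil j v, ← Submodule.coe_inner]
        rw [Finset.sum_congr rfl (fun j _ => this j), tsum_inner hsum, Submodule.coe_inner]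
        simp
    | cons k l' =>
        rw [wordProd_cons, ContinuousLinearMap.comp_apply, ← adjoint_inner_left (W k),
          hadj k]
        simp
  exact sub_eq_zero.mp (dense_zero hmin d horto)

noncomputable def tpa (T : Fin n → H →L[ℂ] H) (l : List (Fin n)) : H →L[ℂ] H :=
  (l.map (fun j => adjoint (T j))).prod

lemma tpa_nil : tpa T [] = 1 := rfl

lemma tpa_cons (j : Fin n) (l : List (Fin n)) (x : H) :
    tpa T (j :: l) x = adjoint (T j) (tpa T l x) := rfl

lemma hTadj (hcomm : ∀ i j : Fin n, T i ∘L T j = T j ∘L T i) (i j : Fin n) :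
    Commute (adjoint (T i)) (adjoint (T j)) := by
  have := congrArg adjoint (hcomm j i)
  rw [adjoint_comp, adjoint_comp] at this
  exact this

lemma tpa_perm (hcomm : ∀ i j : Fin n, T i ∘L T j = T j ∘L T i)
    {l₁ l₂ : List (Fin n)} (h : l₁.Perm l₂) : tpa T l₁ = tpa T l₂ := by
  refine List.Perm.prod_eq' (h.map _) ?_
  rw [List.pairwise_map]
  have : ∀ l : List (Fin n), l.Pairwise (fun a b => Commute (adjoint (T a)) (adjoint (T b))) := by
    intro l
    induction l with
    | nil => exact List.Pairwise.nil
    | cons a l ih => exact List.Pairwise.cons (fun b _ => hTadj hcomm a b) ih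
  exact this l₁

lemma tpa_pull (hcomm : ∀ i j : Fin n, T i ∘L T j = T j ∘L T i)
    (l : List (Fin n)) (j : Fin n) (x : H) :
    tpa T l (adjoint (T j) x) = adjoint (T j) (tpa T l x) := by
  have hc : Commute (adjoint (T j)) (tpa T l) := by
    apply Commute.list_prod_right
    intro b hb
    rw [List.mem_map] at hb
    obtain ⟨a, _, rfl⟩ := hb
    exact hTadj hcomm j a
  calc tpa T l (adjoint (T j) x) = (tpa T l * adjoint (T j)) x := rfl
    _ = (adjoint (T j) * tpa T l) x := by rw [hc.eq]
    _ = adjoint (T j) (tpa T l x) := rfl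


lemma adj_one : adjoint (1 : L →L[ℂ] L) = 1 := by
  rw [ContinuousLinearMap.one_def]
  exact adjoint_id

lemma sum_pi_cons {M : Type*} [AddCommMonoid M] (m : ℕ) (F : (Fin (m+1) → Fin n) → M) :
    ∑ β : Fin (m+1) → Fin n, F β = ∑ j : Fin n, ∑ α : Fin m → Fin n, F (Fin.cons j α) := by
  rw [← Equiv.sum_comp (Fin.consEquiv (fun _ => Fin n)) F, Fintype.sum_prod_type]
  rfl

lemma sum_pi_insert {M : Type*} [AddCommMonoid M] (m : ℕ) (k : Fin (m+1))
    (F : (Fin (m+1) → Fin n) → M) :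
    ∑ β : Fin (m+1) → Fin n, F β = ∑ a : Fin n, ∑ α : Fin m → Fin n, F (Fin.insertNth k a α) := by
  rw [← Equiv.sum_comp (Fin.insertNthEquiv (fun _ => Fin n) k) F, Fintype.sum_prod_type]
  rfl

lemma tpa_sum_inner (hsum : ∑ i : Fin n, T i ∘L adjoint (T i) = 1) :
    ∀ (m : ℕ) (x z : H),
      ∑ α : Fin m → Fin n, ⟪tpa T (List.ofFn α) x, tpa T (List.ofFn α) z⟫ = ⟪x, z⟫ := by
  intro m
  induction m with
  | zero =>
      intro x z
      rw [Fintype.sum_unique (fun (α : Fin 0 → Fin n) =>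
        ⟪tpa T (List.ofFn α) x, tpa T (List.ofFn α) z⟫)]
      simp [tpa_nil]
  | succ m ih =>
      intro x z
      rw [sum_pi_cons]
      have hterm : ∀ (j : Fin n) (α : Fin m → Fin n),
          ⟪tpa T (List.ofFn (Fin.cons j α)) x, tpa T (List.ofFn (Fin.cons j α)) z⟫
          = ⟪adjoint (T j) (tpa T (List.ofFn α) x), adjoint (T j) (tpa T (List.ofFn α) z)⟫ := by
        intro j α
        rw [List.ofFn_cons]
        rfl
      calc ∑ j : Fin n, ∑ α : Fin m → Fin n,
            ⟪tpa T (List.ofFn (Fin.cons j α)) x, tpa T (List.ofFn (Fin.cons j α)) z⟫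
          = ∑ α : Fin m → Fin n, ∑ j : Fin n,
            ⟪adjoint (T j) (tpa T (List.ofFn α) x), adjoint (T j) (tpa T (List.ofFn α) z)⟫ := by
            rw [Finset.sum_comm]
            exact Finset.sum_congr rfl (fun α _ => Finset.sum_congr rfl (fun j _ => hterm j α))
        _ = ∑ α : Fin m → Fin n, ⟪tpa T (List.ofFn α) x, tpa T (List.ofFn α) z⟫ := by
            exact Finset.sum_congr rfl (fun α _ => tsum_inner hsum _ _)
        _ = ⟪x, z⟫ := ih x z

lemma tpa_sum_normsq (hsum : ∑ i : Fin n, T i ∘L adjoint (T i) = 1) (m : ℕ) (x : H) :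
    ∑ α : Fin m → Fin n, ‖tpa T (List.ofFn α) x‖^2 = ‖x‖^2 := by
  have h0 := tpa_sum_inner hsum m x x
  have h2 := congrArg (RCLike.re (K := ℂ)) h0
  rw [map_sum, inner_self_eq_norm_sq] at h2
  rw [← h2]
  exact Finset.sum_congr rfl (fun α _ => (inner_self_eq_norm_sq _).symm)

/-- the expansion identity. -/
lemma expansion
    (hcomm : ∀ i j : Fin n, T i ∘L T j = T j ∘L T i)
    (hsum : ∑ i : Fin n, T i ∘L adjoint (T i) = 1)
    (hisom : ∀ i j : Fin n, adjoint (W i) ∘L W j = if i = j then 1 else 0)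
    (hdil : ∀ (i : Fin n) (u : H), adjoint (W i) (u : L) = ((adjoint (T i)) u : L))
    (hmin : (Submodule.span ℂ {x : L | ∃ (α : List (Fin n)) (u : H),
      x = wordProd W α (u : L)}).topologicalClosure = ⊤) :
    ∀ (m : ℕ) (w : L) (h : H),
      ⟪w, (h : L)⟫ = ∑ α : Fin m → Fin n,
        ⟪adjoint (wordProd W (List.ofFn α)) w, ((tpa T (List.ofFn α) h : H) : L)⟫ := by
  intro m
  induction m with
  | zero =>
      intro w h
      rw [Fintype.sum_unique (fun (α : Fin 0 → Fin n) =>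
        ⟪adjoint (wordProd W (List.ofFn α)) w, ((tpa T (List.ofFn α) h : H) : L)⟫)]
      simp [tpa_nil, wordProd, adj_one]
  | succ m ih =>
      intro w h
      have h0 : ⟪w, (h : L)⟫ = ∑ j : Fin n, ⟪adjoint (W j) w, ((adjoint (T j) h : H) : L)⟫ := by
        rw [step3 hsum hisom hdil hmin h, inner_sum]
        exact Finset.sum_congr rfl (fun j _ => (adjoint_inner_left (W j) _ _).symm)
      rw [h0, sum_pi_cons]
      refine Finset.sum_congr rfl (fun j _ => ?_)
      rw [ih (adjoint (W j) w) (adjoint (T j) h)]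
      refine Finset.sum_congr rfl (fun α _ => ?_)
      rw [List.ofFn_cons, adj_wordProd_cons]
      congr 2
      rw [tpa_cons, tpa_pull hcomm]

lemma wsum_sq (hisom : ∀ i j : Fin n, adjoint (W i) ∘L W j = if i = j then 1 else 0) (w : L) :
    ∑ j : Fin n, ‖adjoint (W j) w‖^2 ≤ ‖w‖^2 := by
  set P : L →L[ℂ] L := ∑ j : Fin n, W j ∘L adjoint (W j) with hP
  set t : ℝ := ∑ j : Fin n, ‖adjoint (W j) w‖^2 with ht
  have hPw : P w = ∑ j : Fin n, W j (adjoint (W j) w) := by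
    rw [hP, ContinuousLinearMap.sum_apply]
    rfl
  have h1 : ⟪P w, w⟫ = (t : ℂ) := by
    rw [hPw, sum_inner, ht]
    push_cast
    refine Finset.sum_congr rfl (fun j _ => ?_)
    rw [← adjoint_inner_right (W j)]
    rw [inner_self_eq_norm_sq_to_K]
    norm_num
  have h2 : ⟪P w, P w⟫ = (t : ℂ) := by
    rw [hPw, sum_inner]
    have : ∀ j : Fin n, ⟪W j (adjoint (W j) w), ∑ k : Fin n, W k (adjoint (W k) w)⟫
        = ⟪adjoint (W j) w, adjoint (W j) w⟫ := by
      intro j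
      rw [inner_sum]
      have : ∀ k : Fin n, ⟪W j (adjoint (W j) w), W k (adjoint (W k) w)⟫
          = if j = k then ⟪adjoint (W j) w, adjoint (W j) w⟫ else 0 := by
        intro k
        rw [isom_pair hisom]
        by_cases hjk : j = k <;> simp [hjk]
      rw [Finset.sum_congr rfl (fun k _ => this k), Finset.sum_ite_eq Finset.univ j
        (fun _ => ⟪adjoint (W j) w, adjoint (W j) w⟫)]
      simp
    rw [Finset.sum_congr rfl (fun j _ => this j), ht]
    push_cast
    refine Finset.sum_congr rfl (fun j _ => ?_)
    rw [inner_self_eq_norm_sq_to_K]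
    norm_num
  have hnorm : ‖P w‖^2 = t := by
    rw [← inner_self_eq_norm_sq (𝕜 := ℂ), h2]
    simp
  have ht0 : 0 ≤ t := by
    rw [ht]
    positivity
  have h4 : t ≤ ‖P w‖ * ‖w‖ := by
    calc t = ‖(t : ℂ)‖ := by rw [Complex.norm_real]; exact (Real.norm_of_nonneg ht0).symm
      _ = ‖⟪P w, w⟫‖ := by rw [h1]
      _ ≤ ‖P w‖ * ‖w‖ := norm_inner_le_norm _ _
  show t ≤ ‖w‖^2
  nlinarith [hnorm, h4, norm_nonneg (P w), norm_nonneg w, sq_nonneg (‖P w‖ - ‖w‖)]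
lemma adjstr_sq (hisom : ∀ i j : Fin n, adjoint (W i) ∘L W j = if i = j then 1 else 0) :
    ∀ (m : ℕ) (w : L),
      ∑ α : Fin m → Fin n, ‖adjoint (wordProd W (List.ofFn α)) w‖^2 ≤ ‖w‖^2 := by
  intro m
  induction m with
  | zero =>
      intro w
      rw [Fintype.sum_unique (fun (α : Fin 0 → Fin n) =>
        ‖adjoint (wordProd W (List.ofFn α)) w‖^2)]
      simp [wordProd, adj_one]
  | succ m ih =>
      intro w
      rw [sum_pi_cons]
      have hterm : ∀ (j : Fin n) (α : Fin m → Fin n),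
          ‖adjoint (wordProd W (List.ofFn (Fin.cons j α))) w‖^2
          = ‖adjoint (wordProd W (List.ofFn α)) (adjoint (W j) w)‖^2 := by
        intro j α
        rw [List.ofFn_cons, adj_wordProd_cons]
      calc ∑ j : Fin n, ∑ α : Fin m → Fin n,
            ‖adjoint (wordProd W (List.ofFn (Fin.cons j α))) w‖^2
          = ∑ j : Fin n, ∑ α : Fin m → Fin n,
            ‖adjoint (wordProd W (List.ofFn α)) (adjoint (W j) w)‖^2 := by
            exact Finset.sum_congr rfl (fun j _ => Finset.sum_congr rfl (fun α _ => hterm j α))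
        _ ≤ ∑ j : Fin n, ‖adjoint (W j) w‖^2 :=
            Finset.sum_le_sum (fun j _ => ih (adjoint (W j) w))
        _ ≤ ‖w‖^2 := wsum_sq hisom w

lemma adj_swap (hcomm : ∀ i j : Fin n, T i ∘L T j = T j ∘L T i) (p q : Fin n) (x : H) :
    adjoint (T p) (adjoint (T q) x) = adjoint (T q) (adjoint (T p) x) := by
  have := DFunLike.congr_fun (hTadj hcomm p q).eq x
  simpa using this

/-- the crucial cancellation `Y = 0`, using normality and sphericality. -/
lemma Y_zero (hcomm : ∀ i j : Fin n, T i ∘L T j = T j ∘L T i)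
    (hnormal : ∀ i : Fin n, T i ∘L adjoint (T i) = adjoint (T i) ∘L T i)
    (hsum : ∑ i : Fin n, T i ∘L adjoint (T i) = 1)
    (i : Fin n) (u : H) :
    ∑ a : Fin n, ∑ b : Fin n,
      ⟪adjoint (T b) ((if a = i then u else 0) - adjoint (T a) (T i u)),
        adjoint (T a) ((if b = i then u else 0) - adjoint (T b) (T i u))⟫ = 0 := by
  set v : H := T i u with hv
  have hexp : ∀ a b : Fin n,
      ⟪adjoint (T b) ((if a = i then u else 0) - adjoint (T a) v),
        adjoint (T a) ((if b = i then u else 0) - adjoint (T b) v)⟫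
      = (⟪adjoint (T b) (if a = i then u else 0), adjoint (T a) (if b = i then u else 0)⟫
        - ⟪adjoint (T b) (if a = i then u else 0), adjoint (T a) (adjoint (T b) v)⟫)
        - (⟪adjoint (T b) (adjoint (T a) v), adjoint (T a) (if b = i then u else 0)⟫
        - ⟪adjoint (T b) (adjoint (T a) v), adjoint (T a) (adjoint (T b) v)⟫) := by
    intro a b
    rw [map_sub, map_sub, inner_sub_left, inner_sub_right, inner_sub_right]
  rw [Finset.sum_congr rfl (fun a _ => Finset.sum_congr rfl (fun b _ => hexp a b))]
  simp only [Finset.sum_sub_distrib]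
  have hvv1 : ⟪adjoint (T i) u, adjoint (T i) u⟫ = ⟪v, v⟫ := by
    have h1 : ⟪adjoint (T i) u, adjoint (T i) u⟫ = ⟪T i (adjoint (T i) u), u⟫ :=
      adjoint_inner_right (T i) _ _
    have h2 : T i (adjoint (T i) u) = adjoint (T i) (T i u) := by
      have := DFunLike.congr_fun (hnormal i) u
      simpa using this
    rw [h1, h2, hv]
    exact adjoint_inner_left (T i) _ _
  have hvv2 : ⟪u, adjoint (T i) v⟫ = ⟪v, v⟫ := by
    rw [adjoint_inner_right (T i), hv]
  have hvv3 : ⟪adjoint (T i) v, u⟫ = ⟪v, v⟫ := by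
    rw [adjoint_inner_left (T i), hv]
  have hSA : ∑ a : Fin n, ∑ b : Fin n,
      ⟪adjoint (T b) (if a = i then u else 0), adjoint (T a) (if b = i then u else 0)⟫
      = ⟪v, v⟫ := by
    have h1 : ∀ a : Fin n, ∑ b : Fin n,
        ⟪adjoint (T b) (if a = i then u else 0), adjoint (T a) (if b = i then u else 0)⟫
        = if a = i then ⟪adjoint (T i) u, adjoint (T i) u⟫ else 0 := by
      intro a
      by_cases ha : a = i
      · have h2 : ∀ b : Fin n,
            ⟪adjoint (T b) (if a = i then u else 0), adjoint (T a) (if b = i then u else 0)⟫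
            = if b = i then ⟪adjoint (T b) u, adjoint (T a) u⟫ else 0 := by
          intro b
          by_cases hb : b = i <;> simp [hb, ha]
        rw [Finset.sum_congr rfl (fun b _ => h2 b),
          Finset.sum_ite_eq' Finset.univ i (fun b => ⟪adjoint (T b) u, adjoint (T a) u⟫),
          if_pos (Finset.mem_univ i), if_pos ha, ha]
      · have h2 : ∀ b : Fin n,
            ⟪adjoint (T b) (if a = i then u else 0), adjoint (T a) (if b = i then u else 0)⟫
            = 0 := by
          intro b
          simp [ha]
        rw [Finset.sum_congr rfl (fun b _ => h2 b), if_neg ha]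
        simp
    rw [Finset.sum_congr rfl (fun a _ => h1 a),
      Finset.sum_ite_eq' Finset.univ i (fun _ => ⟪adjoint (T i) u, adjoint (T i) u⟫),
      if_pos (Finset.mem_univ i), hvv1]
  have hSB : ∑ a : Fin n, ∑ b : Fin n,
      ⟪adjoint (T b) (if a = i then u else 0), adjoint (T a) (adjoint (T b) v)⟫
      = ⟪v, v⟫ := by
    have h1 : ∀ a : Fin n, ∑ b : Fin n,
        ⟪adjoint (T b) (if a = i then u else 0), adjoint (T a) (adjoint (T b) v)⟫
        = if a = i then ⟪u, adjoint (T i) v⟫ else 0 := by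
      intro a
      by_cases ha : a = i
      · have h2 : ∀ b : Fin n,
            ⟪adjoint (T b) (if a = i then u else 0), adjoint (T a) (adjoint (T b) v)⟫
            = ⟪adjoint (T b) u, adjoint (T b) (adjoint (T a) v)⟫ := by
          intro b
          rw [if_pos ha, adj_swap hcomm a b v]
        rw [Finset.sum_congr rfl (fun b _ => h2 b), tsum_inner hsum u (adjoint (T a) v),
          if_pos ha, ha]
      · have h2 : ∀ b : Fin n,
            ⟪adjoint (T b) (if a = i then u else 0), adjoint (T a) (adjoint (T b) v)⟫
            = 0 := by
          intro b
          simp [ha]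
        rw [Finset.sum_congr rfl (fun b _ => h2 b), if_neg ha]
        simp
    rw [Finset.sum_congr rfl (fun a _ => h1 a),
      Finset.sum_ite_eq' Finset.univ i (fun _ => ⟪u, adjoint (T i) v⟫),
      if_pos (Finset.mem_univ i), hvv2]
  have hSC : ∑ a : Fin n, ∑ b : Fin n,
      ⟪adjoint (T b) (adjoint (T a) v), adjoint (T a) (if b = i then u else 0)⟫
      = ⟪v, v⟫ := by
    have h1 : ∀ a : Fin n, ∑ b : Fin n,
        ⟪adjoint (T b) (adjoint (T a) v), adjoint (T a) (if b = i then u else 0)⟫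
        = ⟪adjoint (T a) (adjoint (T i) v), adjoint (T a) u⟫ := by
      intro a
      have h2 : ∀ b : Fin n,
          ⟪adjoint (T b) (adjoint (T a) v), adjoint (T a) (if b = i then u else 0)⟫
          = if b = i then ⟪adjoint (T i) (adjoint (T a) v), adjoint (T a) u⟫ else 0 := by
        intro b
        by_cases hb : b = i <;> simp [hb]
      rw [Finset.sum_congr rfl (fun b _ => h2 b),
        Finset.sum_ite_eq' Finset.univ i
          (fun _ => ⟪adjoint (T i) (adjoint (T a) v), adjoint (T a) u⟫),
        if_pos (Finset.mem_univ i), adj_swap hcomm i a v]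
    rw [Finset.sum_congr rfl (fun a _ => h1 a),
      tsum_inner hsum (adjoint (T i) v) u, hvv3]
  have hSD : ∑ a : Fin n, ∑ b : Fin n,
      ⟪adjoint (T b) (adjoint (T a) v), adjoint (T a) (adjoint (T b) v)⟫
      = ⟪v, v⟫ := by
    have h1 : ∀ a b : Fin n,
        ⟪adjoint (T b) (adjoint (T a) v), adjoint (T a) (adjoint (T b) v)⟫
        = ⟪adjoint (T a) (adjoint (T b) v), adjoint (T a) (adjoint (T b) v)⟫ := by
      intro a b
      rw [adj_swap hcomm b a v]
    rw [Finset.sum_congr rfl (fun a _ => Finset.sum_congr rfl (fun b _ => h1 a b))]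
    rw [Finset.sum_comm]
    have h2 : ∀ b : Fin n, ∑ a : Fin n,
        ⟪adjoint (T a) (adjoint (T b) v), adjoint (T a) (adjoint (T b) v)⟫
        = ⟪adjoint (T b) v, adjoint (T b) v⟫ :=
      fun b => tsum_inner hsum _ _
    rw [Finset.sum_congr rfl (fun b _ => h2 b)]
    exact tsum_inner hsum v v
  rw [hSA, hSB, hSC, hSD]
  ring

noncomputable def fv (T : Fin n → H →L[ℂ] H) (g : Fin n → H) {M : ℕ}
    (β : Fin (M+1) → Fin n) (k : Fin (M+1)) : H :=
  tpa T (List.ofFn (Fin.removeNth k β)) (g (β k))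

lemma fv_insert (g : Fin n → H) {M : ℕ} (k : Fin (M+1)) (a : Fin n) (γ : Fin M → Fin n) :
    fv T g (Fin.insertNth k a γ) k = tpa T (List.ofFn γ) (g a) := by
  unfold fv
  rw [Fin.removeNth_insertNth (α := fun _ => Fin n) k a γ,
    Fin.insertNth_apply_same (α := fun _ => Fin n) k a γ]

lemma sum_ff_diag (hsum : ∑ i : Fin n, T i ∘L adjoint (T i) = 1)
    (g : Fin n → H) (M : ℕ) (k : Fin (M+1)) :
    ∑ β : Fin (M+1) → Fin n, ⟪fv T g β k, fv T g β k⟫ = ∑ a : Fin n, ⟪g a, g a⟫ := by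
  rw [sum_pi_insert M k]
  refine Finset.sum_congr rfl (fun a _ => ?_)
  rw [Finset.sum_congr rfl (fun γ _ => by rw [fv_insert g k a γ])]
  exact tpa_sum_inner hsum M (g a) (g a)

lemma sum_ff_off (hcomm : ∀ i j : Fin n, T i ∘L T j = T j ∘L T i)
    (hsum : ∑ i : Fin n, T i ∘L adjoint (T i) = 1)
    (g : Fin n → H) (m : ℕ) (k l : Fin (m+2)) (hkl : k ≠ l) :
    ∑ β : Fin (m+2) → Fin n, ⟪fv T g β k, fv T g β l⟫
      = ∑ a : Fin n, ∑ b : Fin n, ⟪adjoint (T b) (g a), adjoint (T a) (g b)⟫ := by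
  obtain ⟨l2, hl2⟩ := Fin.exists_succAbove_eq (Ne.symm hkl)
  rw [sum_pi_insert (m+1) k]
  refine Finset.sum_congr rfl (fun a _ => ?_)
  rw [sum_pi_insert m l2]
  refine Finset.sum_congr rfl (fun b _ => ?_)
  have key : ∀ δ : Fin m → Fin n,
      ⟪fv T g (Fin.insertNth k a (Fin.insertNth l2 b δ)) k,
        fv T g (Fin.insertNth k a (Fin.insertNth l2 b δ)) l⟫
      = ⟪tpa T (List.ofFn δ) (adjoint (T b) (g a)),
          tpa T (List.ofFn δ) (adjoint (T a) (g b))⟫ := by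
    intro δ
    set γ : Fin (m+1) → Fin n := Fin.insertNth l2 b δ with hγ
    set β : Fin (m+2) → Fin n := Fin.insertNth k a γ with hβ
    have hβk : β k = a := by
      rw [hβ]
      exact Fin.insertNth_apply_same (α := fun _ => Fin n) k a γ
    have hremk : Fin.removeNth k β = γ := by
      rw [hβ]
      exact Fin.removeNth_insertNth (α := fun _ => Fin n) k a γ
    have hγl2 : γ l2 = b := by
      rw [hγ]
      exact Fin.insertNth_apply_same (α := fun _ => Fin n) l2 b δ
    have hremγ : Fin.removeNth l2 γ = δ := by
      rw [hγ]
      exact Fin.removeNth_insertNth (α := fun _ => Fin n) l2 b δ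
    have hβl : β l = b := by
      rw [← hl2, hβ, Fin.insertNth_apply_succAbove, hγl2]
    have hp : (List.ofFn γ).Perm (b :: List.ofFn δ) := by
      have := ofFn_perm γ l2
      rwa [hγl2, hremγ] at this
    have e1 : fv T g β k = tpa T (List.ofFn δ) (adjoint (T b) (g a)) := by
      show tpa T (List.ofFn (Fin.removeNth k β)) (g (β k)) = _
      rw [hremk, hβk, tpa_perm hcomm hp, tpa_cons]
      exact (tpa_pull hcomm _ b _).symm
    have e2 : fv T g β l = tpa T (List.ofFn δ) (adjoint (T a) (g b)) := by
      show tpa T (List.ofFn (Fin.removeNth l β)) (g (β l)) = _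
      rw [hβl]
      have p2 := ofFn_perm β l
      rw [hβl] at p2
      have p1 := ofFn_perm β k
      rw [hβk, hremk] at p1
      have p4 : (b :: List.ofFn (Fin.removeNth l β)).Perm (b :: (a :: List.ofFn δ)) :=
        p2.symm.trans (p1.trans ((hp.cons a).trans (List.Perm.swap b a (List.ofFn δ))))
      have p5 := p4.cons_inv
      rw [tpa_perm hcomm p5, tpa_cons]
      exact (tpa_pull hcomm _ a _).symm
    rw [e1, e2]
  rw [Finset.sum_congr rfl (fun δ _ => key δ)]
  exact tpa_sum_inner hsum m _ _

/-- Main step: a commuting-piece vector orthogonal to `H` stays orthogonal after `W i`. -/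
lemma main_step
    (hcomm : ∀ i j : Fin n, T i ∘L T j = T j ∘L T i)
    (hnormal : ∀ i : Fin n, T i ∘L adjoint (T i) = adjoint (T i) ∘L T i)
    (hsum : ∑ i : Fin n, T i ∘L adjoint (T i) = 1)
    (hisom : ∀ i j : Fin n, adjoint (W i) ∘L W j = if i = j then 1 else 0)
    (hdil : ∀ (i : Fin n) (u : H), adjoint (W i) (u : L) = ((adjoint (T i)) u : L))
    (hmin : (Submodule.span ℂ {x : L | ∃ (α : List (Fin n)) (u : H),
      x = wordProd W α (u : L)}).topologicalClosure = ⊤)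
    {y : L} (hy : y ∈ commPieceSet W) (hoH : ∀ u : H, ⟪y, (u : L)⟫ = 0)
    (i : Fin n) (u : H) : ⟪y, W i (u : L)⟫ = 0 := by
  set v : H := T i u with hv
  set g : Fin n → H := fun a => (if a = i then u else 0) - adjoint (T a) v with hg
  set c : ℝ := ∑ a : Fin n, ‖g a‖^2 with hc
  have hc0 : 0 ≤ c := by
    rw [hc]
    positivity
  -- the key quantitative bound
  have bound : ∀ m : ℕ, ‖⟪y, W i (u : L)⟫‖^2 ≤ ‖y‖^2 * c / (m+2) := by
    intro m
    -- the insertion permutation fact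
    have hins : ∀ (M : ℕ) (k : Fin (M+1)) (a : Fin n) (γ : Fin M → Fin n),
        (List.ofFn (Fin.insertNth k a γ)).Perm (a :: List.ofFn γ) := by
      intro M k a γ
      have h := ofFn_perm (Fin.insertNth k a γ) k
      rwa [Fin.insertNth_apply_same (α := fun _ => Fin n),
        Fin.removeNth_insertNth (α := fun _ => Fin n)] at h
    -- Z : the collapsed sum
    have hZ : ∑ a : Fin n, ⟪adjoint (W a) y, ((g a : H) : L)⟫ = ⟪y, W i (u : L)⟫ := by
      have h1 : ∀ a : Fin n, ⟪adjoint (W a) y, ((g a : H) : L)⟫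
          = (if a = i then ⟪y, W i (u : L)⟫ else 0) - ⟪y, W a ((adjoint (T a) v : H) : L)⟫ := by
        intro a
        rw [adjoint_inner_left (W a)]
        rw [hg]
        simp only [AddSubgroupClass.coe_sub]
        rw [map_sub, inner_sub_right]
        congr 1
        by_cases ha : a = i
        · subst ha
          simp
        · simp [ha]
      rw [Finset.sum_congr rfl (fun a _ => h1 a), Finset.sum_sub_distrib,
        Finset.sum_ite_eq' Finset.univ i (fun _ => ⟪y, W i (u : L)⟫),
        if_pos (Finset.mem_univ i)]
      have h2 : ∑ a : Fin n, ⟪y, W a ((adjoint (T a) v : H) : L)⟫ = ⟪y, (v : L)⟫ := by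
        rw [← inner_sum, ← step3 hsum hisom hdil hmin v]
      rw [h2, hoH v, sub_zero]
    -- the per-position sums all equal Z
    have hSk : ∀ k : Fin (m+2),
        ∑ β : Fin (m+2) → Fin n,
          ⟪adjoint (wordProd W (List.ofFn β)) y, ((fv T g β k : H) : L)⟫
        = ⟪y, W i (u : L)⟫ := by
      intro k
      rw [sum_pi_insert (m+1) k]
      rw [← hZ]
      refine Finset.sum_congr rfl (fun a _ => ?_)
      have h3 : ∀ γ : Fin (m+1) → Fin n,
          ⟪adjoint (wordProd W (List.ofFn (Fin.insertNth k a γ))) y,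
            ((fv T g (Fin.insertNth k a γ) k : H) : L)⟫
          = ⟪adjoint (wordProd W (List.ofFn γ)) (adjoint (W a) y),
              ((tpa T (List.ofFn γ) (g a) : H) : L)⟫ := by
        intro γ
        rw [fv_insert g k a γ, cp_perm hy (hins (m+1) k a γ), adj_wordProd_cons]
      rw [Finset.sum_congr rfl (fun γ _ => h3 γ)]
      exact (expansion hcomm hsum hisom hdil hmin (m+1) (adjoint (W a) y) (g a)).symm
    -- C1 : the inner product as a sum against the symmetrized kernel
    have hC1 : ⟪y, W i (u : L)⟫
        = ∑ β : Fin (m+2) → Fin n,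
          ⟪adjoint (wordProd W (List.ofFn β)) y,
            ((((m+2 : ℂ)⁻¹ • ∑ k : Fin (m+2), fv T g β k) : H) : L)⟫ := by
      have h4 : ∀ β : Fin (m+2) → Fin n,
          ⟪adjoint (wordProd W (List.ofFn β)) y,
            ((((m+2 : ℂ)⁻¹ • ∑ k : Fin (m+2), fv T g β k) : H) : L)⟫
          = (m+2 : ℂ)⁻¹ * ∑ k : Fin (m+2),
              ⟪adjoint (wordProd W (List.ofFn β)) y, ((fv T g β k : H) : L)⟫ := by
        intro β
        rw [Submodule.coe_smul, inner_smul_right]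
        congr 1
        rw [Submodule.coe_sum, inner_sum]
      rw [Finset.sum_congr rfl (fun β _ => h4 β), ← Finset.mul_sum, Finset.sum_comm]
      rw [Finset.sum_congr rfl (fun k _ => hSk k)]
      rw [Finset.sum_const, Finset.card_univ, Fintype.card_fin]
      have hm2 : ((m : ℂ) + 2) = ((m+2 : ℕ) : ℂ) := by push_cast; ring
      rw [nsmul_eq_mul, ← mul_assoc, hm2, inv_mul_cancel₀
        (Nat.cast_ne_zero.mpr (by omega)), one_mul]
    -- C3 : norm of the kernel
    have hC3 : ∑ β : Fin (m+2) → Fin n,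
        ‖((m+2 : ℂ)⁻¹ • ∑ k : Fin (m+2), fv T g β k : H)‖^2 = c / (m+2) := by
      have h5 : ∀ β : Fin (m+2) → Fin n,
          ‖((m+2 : ℂ)⁻¹ • ∑ k : Fin (m+2), fv T g β k : H)‖^2
          = ((m+2 : ℝ)⁻¹)^2 * ‖(∑ k : Fin (m+2), fv T g β k : H)‖^2 := by
        intro β
        rw [norm_smul, mul_pow]
        congr 2
        rw [norm_inv]
        congr 1
        have hm2 : ((m : ℂ) + 2) = ((m+2 : ℕ) : ℂ) := by push_cast; ring
        rw [hm2, Complex.norm_natCast]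
        push_cast
        ring
      rw [Finset.sum_congr rfl (fun β _ => h5 β), ← Finset.mul_sum]
      have h6 : ∑ β : Fin (m+2) → Fin n, ‖(∑ k : Fin (m+2), fv T g β k : H)‖^2
          = (m+2) * c := by
        have h9 : ∀ (k l : Fin (m+2)), ∑ β : Fin (m+2) → Fin n, ⟪fv T g β k, fv T g β l⟫
            = if k = l then ∑ a : Fin n, ⟪g a, g a⟫ else 0 := by
          intro k l
          by_cases hkl : k = l
          · subst hkl
            rw [if_pos rfl]
            exact sum_ff_diag hsum g (m+1) k
          · rw [if_neg hkl, sum_ff_off hcomm hsum g m k l hkl]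
            have hYZ := Y_zero hcomm hnormal hsum i u
            rw [hg]
            convert hYZ using 1
        have hBig : (∑ β : Fin (m+2) → Fin n, ∑ k : Fin (m+2), ∑ l : Fin (m+2),
            ⟪fv T g β k, fv T g β l⟫)
            = (m+2 : ℕ) • ∑ a : Fin n, ⟪g a, g a⟫ := by
          have hswap := Finset.sum_comm (s := (Finset.univ : Finset (Fin (m+2) → Fin n)))
            (t := (Finset.univ : Finset (Fin (m+2))))
            (f := fun β k => ∑ l : Fin (m+2), ⟪fv T g β k, fv T g β l⟫)
          rw [hswap]
          have h8 : ∀ k : Fin (m+2), ∑ β : Fin (m+2) → Fin n, ∑ l : Fin (m+2),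
              ⟪fv T g β k, fv T g β l⟫ = ∑ a : Fin n, ⟪g a, g a⟫ := by
            intro k
            have hswap2 := Finset.sum_comm (s := (Finset.univ : Finset (Fin (m+2) → Fin n)))
              (t := (Finset.univ : Finset (Fin (m+2))))
              (f := fun β l => ⟪fv T g β k, fv T g β l⟫)
            rw [hswap2]
            rw [Finset.sum_congr rfl (fun l _ => h9 k l),
              Finset.sum_ite_eq Finset.univ k (fun _ => ∑ a : Fin n, ⟪g a, g a⟫),
              if_pos (Finset.mem_univ k)]
          rw [Finset.sum_congr rfl (fun k _ => h8 k), Finset.sum_const, Finset.card_univ,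
            Fintype.card_fin]
        have h7 : ∀ β : Fin (m+2) → Fin n,
            (‖(∑ k : Fin (m+2), fv T g β k : H)‖^2 : ℝ)
            = RCLike.re (K := ℂ) (∑ k : Fin (m+2), ∑ l : Fin (m+2),
                ⟪fv T g β k, fv T g β l⟫) := by
          intro β
          rw [← inner_self_eq_norm_sq (𝕜 := ℂ)]
          congr 1
          rw [sum_inner]
          exact Finset.sum_congr rfl (fun k _ => inner_sum _ _ _)
        rw [Finset.sum_congr rfl (fun β _ => h7 β), ← map_sum, hBig, map_nsmul]
        have h10 : RCLike.re (K := ℂ) (∑ a : Fin n, ⟪g a, g a⟫) = c := by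
          rw [map_sum, hc]
          exact Finset.sum_congr rfl (fun a _ => inner_self_eq_norm_sq _)
        rw [h10, nsmul_eq_mul]
        push_cast
        ring
      rw [h6]
      field_simp
    -- Cauchy-Schwarz assembly
    have hCS1 : ‖⟪y, W i (u : L)⟫‖
        ≤ ∑ β : Fin (m+2) → Fin n, ‖adjoint (wordProd W (List.ofFn β)) y‖
            * ‖(((m+2 : ℂ)⁻¹ • ∑ k : Fin (m+2), fv T g β k) : H)‖ := by
      rw [hC1]
      refine (norm_sum_le _ _).trans ?_
      refine Finset.sum_le_sum (fun β _ => ?_)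
      refine (norm_inner_le_norm _ _).trans ?_
      exact le_of_eq rfl
    have hQ2 : ‖⟪y, W i (u : L)⟫‖^2
        ≤ (∑ β : Fin (m+2) → Fin n, ‖adjoint (wordProd W (List.ofFn β)) y‖^2)
          * (∑ β : Fin (m+2) → Fin n,
              ‖(((m+2 : ℂ)⁻¹ • ∑ k : Fin (m+2), fv T g β k) : H)‖^2) := by
      refine le_trans (pow_le_pow_left₀ (norm_nonneg _) hCS1 2) ?_
      exact Finset.sum_mul_sq_le_sq_mul_sq _ _ _
    rw [hC3] at hQ2
    calc ‖⟪y, W i (u : L)⟫‖^2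
        ≤ (∑ β : Fin (m+2) → Fin n, ‖adjoint (wordProd W (List.ofFn β)) y‖^2) * (c / (m+2)) :=
          hQ2
      _ ≤ ‖y‖^2 * (c / (m+2)) := by
          refine mul_le_mul_of_nonneg_right (adjstr_sq hisom (m+2) y) (by positivity)
      _ = ‖y‖^2 * c / (m+2) := by ring

  -- conclude by letting m → ∞
  by_contra hne
  have hQpos : 0 < ‖⟪y, W i (u : L)⟫‖^2 := by
    have : ‖⟪y, W i (u : L)⟫‖ ≠ 0 := fun h => hne (norm_eq_zero.mp h)
    positivity
  obtain ⟨m, hm⟩ := exists_nat_gt ((‖y‖^2 * c) / ‖⟪y, W i (u : L)⟫‖^2)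
  have h1 := bound m
  have h2 : ‖y‖^2 * c < (m : ℝ) * ‖⟪y, W i (u : L)⟫‖^2 := (div_lt_iff₀ hQpos).mp hm
  have h3 : (0:ℝ) < (m:ℝ) + 2 := by positivity
  rw [le_div_iff₀ h3] at h1
  nlinarith [hQpos]


lemma cp_adj {y : L} (hy : y ∈ commPieceSet W) (a : Fin n) :
    adjoint (W a) y ∈ commPieceSet W := by
  intro i j α
  rw [← adj_wordProd_cons W a α]
  exact hy i j (a :: α)

lemma adj_word_coe (hdil : ∀ (i : Fin n) (u : H), adjoint (W i) (u : L) = ((adjoint (T i)) u : L)) :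
    ∀ (l : List (Fin n)) (u : H), ∃ h : H, adjoint (wordProd W l) (u : L) = (h : L) := by
  intro l
  induction l with
  | nil =>
      intro u
      exact ⟨u, by rw [show wordProd W ([] : List (Fin n)) = 1 from rfl, adj_one,
        ContinuousLinearMap.one_apply]⟩
  | cons j l ih =>
      intro u
      rw [adj_wordProd_cons, hdil j u]
      exact ih _

lemma mem_cp_of_H (hcomm : ∀ i j : Fin n, T i ∘L T j = T j ∘L T i)
    (hdil : ∀ (i : Fin n) (u : H), adjoint (W i) (u : L) = ((adjoint (T i)) u : L))
    (u : H) : (u : L) ∈ commPieceSet W := by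
  intro i j α
  obtain ⟨h, hh⟩ := adj_word_coe hdil α u
  rw [hh, hdil j h, hdil i (adjoint (T j) h), hdil i h, hdil j (adjoint (T i) h)]
  exact congrArg _ (adj_swap hcomm i j h)

lemma cp_orth_all
    (hcomm : ∀ i j : Fin n, T i ∘L T j = T j ∘L T i)
    (hnormal : ∀ i : Fin n, T i ∘L adjoint (T i) = adjoint (T i) ∘L T i)
    (hsum : ∑ i : Fin n, T i ∘L adjoint (T i) = 1)
    (hisom : ∀ i j : Fin n, adjoint (W i) ∘L W j = if i = j then 1 else 0)
    (hdil : ∀ (i : Fin n) (u : H), adjoint (W i) (u : L) = ((adjoint (T i)) u : L))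
    (hmin : (Submodule.span ℂ {x : L | ∃ (α : List (Fin n)) (u : H),
      x = wordProd W α (u : L)}).topologicalClosure = ⊤) :
    ∀ (l : List (Fin n)) {y : L}, y ∈ commPieceSet W → (∀ u : H, ⟪y, (u : L)⟫ = 0) →
      ∀ u : H, ⟪adjoint (wordProd W l) y, (u : L)⟫ = 0 := by
  intro l
  induction l with
  | nil =>
      intro y hy hoH u
      have h1 : adjoint (wordProd W ([] : List (Fin n))) y = y := by
        rw [show wordProd W ([] : List (Fin n)) = 1 from rfl, adj_one,
          ContinuousLinearMap.one_apply]
      rw [h1]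
      exact hoH u
  | cons j l ih =>
      intro y hy hoH u
      rw [adj_wordProd_cons]
      refine ih (cp_adj hy j) (fun u' => ?_) u
      rw [adjoint_inner_left]
      exact main_step hcomm hnormal hsum hisom hdil hmin hy hoH j u'

end Aux

/-- if `T` is a spherical unitary on `H` and `W` is a minimal isometric
dilation of `T` on `L ⊇ H`, then the maximal commuting piece space of `W` is `H`. -/
theorem stmt8 {n : ℕ} (hn : 1 ≤ n) {L : Type*} [NormedAddCommGroup L]
    [InnerProductSpace ℂ L] [CompleteSpace L]
    (H : Submodule ℂ L) [CompleteSpace H]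
    (T : Fin n → H →L[ℂ] H)
    (hcomm : ∀ i j : Fin n, T i ∘L T j = T j ∘L T i)
    (hnormal : ∀ i : Fin n, T i ∘L adjoint (T i) = adjoint (T i) ∘L T i)
    (hsum : ∑ i : Fin n, T i ∘L adjoint (T i) = 1)
    (W : Fin n → L →L[ℂ] L)
    (hisom : ∀ i j : Fin n, adjoint (W i) ∘L W j = if i = j then 1 else 0)
    (hdil : ∀ (i : Fin n) (u : H), adjoint (W i) (u : L) = ((adjoint (T i)) u : L))
    (hmin : (Submodule.span ℂ {x : L | ∃ (α : List (Fin n)) (u : H),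
      x = wordProd W α (u : L)}).topologicalClosure = ⊤) :
    commPieceSet W = (H : Set L) := by
  apply Set.Subset.antisymm
  · intro x hx
    set u0 : H := H.orthogonalProjectionOnto x with hu0
    set y : L := x - (u0 : L) with hy0
    have hyH : y ∈ Hᗮ := H.sub_starProjection_mem_orthogonal x
    have hycp : y ∈ commPieceSet W := by
      intro i j α
      have h1 := hx i j α
      have h2 := mem_cp_of_H hcomm hdil u0 i j α
      rw [hy0]
      simp only [map_sub]
      rw [h1, h2]
    have hoH : ∀ u : H, ⟪y, (u : L)⟫ = 0 := by
      intro u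
      rw [← inner_conj_symm, hyH (u : L) u.2, map_zero]
    have hzero : y = 0 := by
      refine dense_zero hmin y (fun l u => ?_)
      rw [← adjoint_inner_left]
      exact cp_orth_all hcomm hnormal hsum hisom hdil hmin l hycp hoH u
    have hx0 : x = (u0 : L) := by
      rw [hy0] at hzero
      rwa [sub_eq_zero] at hzero
    rw [hx0]
    exact u0.2
  · intro x hx
    have : x = ((⟨x, hx⟩ : H) : L) := rfl
    rw [this]
    exact mem_cp_of_H hcomm hdil _
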